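/- If T is a covariant tensor on a Lorentzian vector space that factors as a tensor product T = k₁ ⊗ ⋯ ⊗ k_r of null covectors (each k_i satisfies g⁻¹(k_i,k_i) = 0), then either T or -T has the dominant property; that is, T is a causal tensor. -/
import Mathlib

open scoped BigOperators

noncomputable section

/-- Minkowski metric on `Fin n → ℝ`, mostly-plus signature (1, n-1). -/
def mink (n : ℕ) [NeZero n] (u v : Fin n → ℝ) : ℝ :=
  ∑ i : Fin n, (if i = 0 then (-1 : ℝ) else 1) * u i * v i

/-- Future-pointing causal vector: nonpositive norm, in the closed future half-cone. -/
def FutureCausal (n : ℕ) [NeZero n] (u : Fin n → ℝ) : Prop :=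
  mink n u u ≤ 0 ∧ 0 ≤ u 0

/-- Inverse Minkowski metric acting on covectors (components in the standard basis). -/
def minkInv (n : ℕ) [NeZero n] (k l : (Fin n → ℝ) →ₗ[ℝ] ℝ) : ℝ :=
  ∑ i : Fin n, (if i = 0 then (-1 : ℝ) else 1) * k (Pi.single i 1) * l (Pi.single i 1)

lemma key (n : ℕ) [NeZero n] (k : (Fin n → ℝ) →ₗ[ℝ] ℝ)
    (hnull : minkInv n k k = 0) (h0 : 0 ≤ k (Pi.single 0 1))
    (u : Fin n → ℝ) (hu : FutureCausal n u) : 0 ≤ k u := by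
  classical
  set a : Fin n → ℝ := fun j => k (Pi.single j 1) with ha
  have hrep : k u = ∑ j : Fin n, u j * a j := by
    rw [LinearMap.pi_apply_eq_sum_univ]
    refine Finset.sum_congr rfl fun j _ => ?_
    have : (fun i => if j = i then (1:ℝ) else 0) = Pi.single j 1 := by
      funext i; simp [Pi.single_apply, eq_comm]
    rw [this, smul_eq_mul, ha]
  set s : Finset (Fin n) := Finset.univ.erase 0 with hs
  have h0mem : (0 : Fin n) ∈ (Finset.univ : Finset (Fin n)) := Finset.mem_univ _
  have hsplit : ∀ f : Fin n → ℝ,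
      ∑ j : Fin n, f j = f 0 + ∑ j ∈ s, f j := fun f =>
    (Finset.add_sum_erase _ f h0mem).symm
  have hnull' : ∑ j ∈ s, a j ^ 2 = a 0 ^ 2 := by
    have := hnull
    unfold minkInv at this
    rw [hsplit (fun j => (if j = 0 then (-1:ℝ) else 1) * k (Pi.single j 1) * k (Pi.single j 1))] at this
    simp only [if_pos rfl, if_true] at this
    have hrw : ∑ j ∈ s, (if j = 0 then (-1:ℝ) else 1) * k (Pi.single j 1) * k (Pi.single j 1)
        = ∑ j ∈ s, a j ^ 2 := by
      refine Finset.sum_congr rfl fun j hj => ?_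
      have : j ≠ 0 := (Finset.mem_erase.mp hj).1
      simp [this, ha, sq, mul_comm]
    rw [hrw] at this
    nlinarith [this]
  have hcaus : ∑ j ∈ s, u j ^ 2 ≤ u 0 ^ 2 := by
    have := hu.1
    unfold mink at this
    rw [hsplit (fun j => (if j = 0 then (-1:ℝ) else 1) * u j * u j)] at this
    simp only [if_pos rfl, if_true] at this
    have hrw : ∑ j ∈ s, (if j = 0 then (-1:ℝ) else 1) * u j * u j
        = ∑ j ∈ s, u j ^ 2 := by
      refine Finset.sum_congr rfl fun j hj => ?_
      have : j ≠ 0 := (Finset.mem_erase.mp hj).1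
      simp [this, sq]
    rw [hrw] at this
    nlinarith [this]
  have hCS : (∑ j ∈ s, u j * a j) ^ 2 ≤ (∑ j ∈ s, u j ^ 2) * ∑ j ∈ s, a j ^ 2 :=
    Finset.sum_mul_sq_le_sq_mul_sq s _ _
  have hu0 : 0 ≤ u 0 := hu.2
  have hbound : (∑ j ∈ s, u j * a j) ^ 2 ≤ (u 0 * a 0) ^ 2 := by
    have hsq : 0 ≤ ∑ j ∈ s, a j ^ 2 := Finset.sum_nonneg fun j _ => sq_nonneg _
    calc (∑ j ∈ s, u j * a j) ^ 2 ≤ (∑ j ∈ s, u j ^ 2) * ∑ j ∈ s, a j ^ 2 := hCS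
      _ ≤ u 0 ^ 2 * a 0 ^ 2 := by
          rw [← hnull']
          exact mul_le_mul_of_nonneg_right hcaus hsq
      _ = (u 0 * a 0) ^ 2 := by ring
  rw [hrep, hsplit (fun j => u j * a j)]
  have ha0 : 0 ≤ u 0 * a 0 := mul_nonneg hu0 h0
  nlinarith [hbound, ha0]

lemma key' (n : ℕ) [NeZero n] (k : (Fin n → ℝ) →ₗ[ℝ] ℝ)
    (hnull : minkInv n k k = 0) (h0 : k (Pi.single 0 1) ≤ 0)
    (u : Fin n → ℝ) (hu : FutureCausal n u) : k u ≤ 0 := by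
  have hnull' : minkInv n (-k) (-k) = 0 := by
    unfold minkInv at hnull ⊢
    simpa using hnull
  have := key n (-k) hnull' (by simpa using h0) u hu
  simpa using this

/-- A tensor product `k₁ ⊗ ⋯ ⊗ k_r` of null covectors is a causal tensor:
either it or its negative has the dominant property. -/
theorem stmt_5 (n r : ℕ) [NeZero n]
    (k : Fin r → ((Fin n → ℝ) →ₗ[ℝ] ℝ))
    (hnull : ∀ i, minkInv n (k i) (k i) = 0) :
    (∀ u : Fin r → (Fin n → ℝ), (∀ i, FutureCausal n (u i)) →
        0 ≤ ∏ i : Fin r, k i (u i)) ∨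
    (∀ u : Fin r → (Fin n → ℝ), (∀ i, FutureCausal n (u i)) →
        (∏ i : Fin r, k i (u i)) ≤ 0) := by
  classical
  set ε : Fin r → ℝ := fun i => if 0 ≤ k i (Pi.single 0 1) then 1 else -1 with hε
  have hterm : ∀ i (v : Fin n → ℝ), FutureCausal n v → 0 ≤ ε i * k i v := by
    intro i v hv
    by_cases h : 0 ≤ k i (Pi.single 0 1)
    · simp only [hε, if_pos h, one_mul]
      exact key n (k i) (hnull i) h v hv
    · simp only [hε, if_neg h]
      have := key' n (k i) (hnull i) (le_of_not_ge h) v hv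
      nlinarith
  have hprod : ∀ u : Fin r → (Fin n → ℝ), (∀ i, FutureCausal n (u i)) →
      0 ≤ (∏ i : Fin r, ε i) * ∏ i : Fin r, k i (u i) := by
    intro u hu
    rw [← Finset.prod_mul_distrib]
    exact Finset.prod_nonneg fun i _ => hterm i (u i) (hu i)
  have hsign : (∏ i : Fin r, ε i) = 1 ∨ (∏ i : Fin r, ε i) = -1 := by
    refine Finset.prod_induction ε (fun x => x = 1 ∨ x = -1) ?_ (Or.inl rfl) ?_
    · rintro x y (rfl | rfl) (rfl | rfl) <;> norm_num
    · intro i _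
      by_cases h : 0 ≤ k i (Pi.single 0 1) <;> simp [hε, h]
  rcases hsign with h | h
  · left; intro u hu
    have := hprod u hu; rw [h, one_mul] at this; exact this
  · right; intro u hu
    have := hprod u hu; rw [h] at this; linarith
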